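/- Let H ∈ (1/2,1) and T > 0. The linear map K*_H defined by (K*_H f)(t) = c(H)·t^{−(H−1/2)}·∫_t^T f(u)·u^{H−1/2}·(u−t)^{H−3/2} du is a bounded linear operator from L²([0,T]) to L²([0,T]), with ‖K*_H f‖_{L²} ≤ sqrt(2H)·T^{H−1/2}·‖f‖_{L²}. -/

import Mathlib

open MeasureTheory Real Set Filter
open scoped ENNReal NNReal

/-- The normalizing constant `c(H)` of the Molchan–Golosov kernel. -/
noncomputable def cH (H : ℝ) : ℝ :=
  Real.sqrt (2 * H * Real.Gamma (3/2 - H) / (Real.Gamma (H + 1/2) * Real.Gamma (2 - 2*H)))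
    * (H - 1/2)

/-- The Molchan–Golosov kernel `K_H(t,s)`; it vanishes for `s ≥ t`. -/
noncomputable def KH (H t s : ℝ) : ℝ :=
  if s < t then
    cH H * s ^ (-(H - 1/2)) * ∫ u in s..t, u ^ (H - 1/2) * (u - s) ^ (H - 3/2)
  else 0

/-- The covariance function of fractional Brownian motion. -/
noncomputable def RH (H t s : ℝ) : ℝ :=
  (t ^ (2*H) + s ^ (2*H) - |t - s| ^ (2*H)) / 2

/-- The adjoint associated operator `K*_H` of the Molchan–Golosov kernel on `[0,T]`:
`(K*_H f)(t) = c(H)·t^{−(H−1/2)}·∫_t^T f(u)·u^{H−1/2}·(u−t)^{H−3/2} du`. -/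
noncomputable def Kstar (H T : ℝ) (f : ℝ → ℝ) (t : ℝ) : ℝ :=
  cH H * t ^ (-(H - 1/2)) * ∫ u in t..T, f u * u ^ (H - 1/2) * (u - t) ^ (H - 3/2)

/- ### Auxiliary lemmas -/
lemma real_beta_integrable {a b : ℝ} (ha : 0 < a) (hb : 0 < b) :
    IntervalIntegrable (fun x : ℝ => x ^ (a-1) * (1-x) ^ (b-1)) volume 0 1 := by
  have hc := Complex.betaIntegral_convergent (u := (a:ℂ)) (v := (b:ℂ)) (by simpa) (by simpa)
  have heq : ∀ᵐ x ∂(volume.restrict (Ioc (0:ℝ) 1)),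
      ((fun x : ℝ => (x:ℂ) ^ ((a:ℂ)-1) * ((1:ℂ)-x) ^ ((b:ℂ)-1)) x) =
        ((x ^ (a-1) * (1-x) ^ (b-1) : ℝ) : ℂ) := by
    filter_upwards [ae_restrict_mem measurableSet_Ioc] with x hx
    rw [Complex.ofReal_mul, Complex.ofReal_cpow hx.1.le,
      Complex.ofReal_cpow (by linarith [hx.2] : (0:ℝ) ≤ 1 - x)]
    push_cast
    ring_nf
  have h2 : IntegrableOn (fun x : ℝ => ((x ^ (a-1) * (1-x) ^ (b-1) : ℝ) : ℂ)) (Ioc (0:ℝ) 1)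
      volume := hc.1.congr heq
  have h3 : IntegrableOn (fun x : ℝ => x ^ (a-1) * (1-x) ^ (b-1)) (Ioc (0:ℝ) 1) volume := by
    have := h2.re
    refine this.congr (Filter.Eventually.of_forall fun x => ?_)
    simp
  constructor
  · exact h3
  · simp [IntegrableOn, Measure.restrict_eq_zero, Ioc_eq_empty, not_lt.2 zero_le_one]

lemma real_beta_value {a b : ℝ} (ha : 0 < a) (hb : 0 < b) :
    ∫ x in (0:ℝ)..1, x ^ (a-1) * (1-x) ^ (b-1)
      = Real.Gamma a * Real.Gamma b / Real.Gamma (a+b) := by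
  have hΓ : (Complex.Gamma ((a:ℂ)+b)) ≠ 0 := by
    rw [show ((a:ℂ)+b) = ((a+b : ℝ) : ℂ) by push_cast; ring, Complex.Gamma_ofReal]
    exact_mod_cast (Real.Gamma_pos_of_pos (by linarith)).ne'
  have key := Complex.Gamma_mul_Gamma_eq_betaIntegral (s := (a:ℂ)) (t := (b:ℂ))
    (by simpa) (by simpa)
  have hbeta : Complex.betaIntegral a b
      = Complex.Gamma a * Complex.Gamma b / Complex.Gamma ((a:ℂ)+b) := by
    rw [eq_div_iff hΓ]; linear_combination -key
  have heq : Complex.betaIntegral a b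
      = ((∫ x in (0:ℝ)..1, x ^ (a-1) * (1-x) ^ (b-1) : ℝ) : ℂ) := by
    rw [Complex.betaIntegral, ← intervalIntegral.integral_ofReal]
    refine intervalIntegral.integral_congr fun x hx => ?_
    rw [Set.uIcc_of_le zero_le_one] at hx
    rw [Complex.ofReal_mul, Complex.ofReal_cpow hx.1,
      Complex.ofReal_cpow (by linarith [hx.2] : (0:ℝ) ≤ 1 - x)]
    push_cast
    ring_nf
  have : ((∫ x in (0:ℝ)..1, x ^ (a-1) * (1-x) ^ (b-1) : ℝ) : ℂ)
      = ((Real.Gamma a * Real.Gamma b / Real.Gamma (a+b) : ℝ) : ℂ) := by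
    rw [← heq, hbeta]
    push_cast [← Complex.Gamma_ofReal]
    norm_num
  exact_mod_cast this

lemma beta_scaled_integrable {u a b : ℝ} (hu : 0 < u) (ha : 0 < a) (hb : 0 < b) :
    IntervalIntegrable (fun t : ℝ => t ^ (a-1) * (u-t) ^ (b-1)) volume 0 u := by
  have h0 := (real_beta_integrable ha hb).comp_mul_left (c := u⁻¹)
  rw [zero_div, one_div, inv_inv] at h0
  have ae1 : ∀ᵐ x ∂(volume.restrict (Set.uIoc (0:ℝ) u)),
      (u⁻¹*x) ^ (a-1) * (1-u⁻¹*x) ^ (b-1)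
        = (u ^ (a-1) * u ^ (b-1))⁻¹ * (x ^ (a-1) * (u-x) ^ (b-1)) := by
    rw [Set.uIoc_of_le hu.le]
    filter_upwards [ae_restrict_mem measurableSet_Ioc] with x hx
    have hx0 : 0 ≤ x := hx.1.le
    have hux : 0 ≤ u - x := by linarith [hx.2]
    have h1 : u⁻¹ * x = x / u := by ring
    rw [h1]
    rw [show 1 - x/u = (u-x)/u by field_simp]
    rw [Real.div_rpow hx0 hu.le, Real.div_rpow hux hu.le]
    field_simp [(Real.rpow_pos_of_pos hu _).ne']
  have h1 := h0.congr_ae ae1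
  have h2 := h1.const_mul (u ^ (a-1) * u ^ (b-1))
  refine h2.congr_ae (Filter.Eventually.of_forall fun x => ?_)
  simp only [← mul_assoc,
    mul_inv_cancel₀ (show u ^ (a-1) * u ^ (b-1) ≠ 0 by positivity), one_mul]

lemma beta_scaled_value {u a b : ℝ} (hu : 0 < u) (ha : 0 < a) (hb : 0 < b) :
    ∫ t in (0:ℝ)..u, t ^ (a-1) * (u-t) ^ (b-1)
      = u ^ (a+b-1) * (Real.Gamma a * Real.Gamma b / Real.Gamma (a+b)) := by
  have h := intervalIntegral.integral_comp_mul_left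
    (f := fun t : ℝ => t ^ (a-1) * (u-t) ^ (b-1)) (a := 0) (b := 1) (c := u) hu.ne'
  simp only [mul_zero, mul_one] at h
  have h2 : ∫ x in (0:ℝ)..1, (u*x) ^ (a-1) * (u-u*x) ^ (b-1)
      = u ^ (a-1) * u ^ (b-1) * ∫ x in (0:ℝ)..1, x ^ (a-1) * (1-x) ^ (b-1) := by
    rw [← intervalIntegral.integral_const_mul]
    refine intervalIntegral.integral_congr fun x hx => ?_
    rw [Set.uIcc_of_le zero_le_one] at hx
    have h3 : u - u*x = u * (1-x) := by ring
    rw [h3, Real.mul_rpow hu.le hx.1, Real.mul_rpow hu.le (by linarith [hx.2])]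
    ring
  rw [h2, real_beta_value ha hb] at h
  have h4 := congrArg (fun z => u * z) h
  simp only [smul_eq_mul, ← mul_assoc, mul_inv_cancel₀ hu.ne', one_mul] at h4
  rw [← h4, show a+b-1 = (a-1)+(b-1)+1 by ring, Real.rpow_add hu, Real.rpow_add hu,
    Real.rpow_one]
  ring

lemma ofReal_integral_le {α : Type*} [MeasurableSpace α] {ν : Measure α} {f : α → ℝ}
    (hnn : 0 ≤ᵐ[ν] f) :
    ENNReal.ofReal (∫ x, f x ∂ν) ≤ ∫⁻ x, ENNReal.ofReal (f x) ∂ν := by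
  by_cases hi : Integrable f ν
  · exact (MeasureTheory.ofReal_integral_eq_lintegral_ofReal hi hnn).le
  · rw [integral_undef hi]; simp

/-- `K*_H` is a bounded linear operator on `L²([0,T])` with
`‖K*_H f‖ ≤ sqrt(2H)·T^{H−1/2}·‖f‖`. -/
theorem Kstar_bounded (H T : ℝ) (hH : H ∈ Set.Ioo (1/2 : ℝ) 1) (hT : 0 < T) :
    ∀ f : ℝ → ℝ, MemLp f 2 (volume.restrict (Set.Ioc (0:ℝ) T)) →
      MemLp (Kstar H T f) 2 (volume.restrict (Set.Ioc (0:ℝ) T)) ∧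
      eLpNorm (Kstar H T f) 2 (volume.restrict (Set.Ioc (0:ℝ) T))
        ≤ ENNReal.ofReal (Real.sqrt (2*H) * T ^ (H - 1/2)) *
            eLpNorm f 2 (volume.restrict (Set.Ioc (0:ℝ) T)) := by
  obtain ⟨hH1, hH2⟩ := hH
  intro f hf
  set μ : Measure ℝ := volume.restrict (Set.Ioc (0:ℝ) T) with hμ_def
  set e : ℝ := H - 1/2 with he_def
  have he0 : 0 < e := by rw [he_def]; linarith
  have he1 : e < 1/2 := by rw [he_def]; linarith
  have he32 : H - 3/2 = e - 1 := by rw [he_def]; ring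
  have hc0 : 0 ≤ cH H := mul_nonneg (Real.sqrt_nonneg _) (by linarith)
  -- measurable representative
  set g : ℝ → ℝ := hf.1.mk f with hg_def
  have hgm : StronglyMeasurable g := hf.1.stronglyMeasurable_mk
  have hfg : f =ᵐ[μ] g := hf.1.ae_eq_mk
  have hg : MemLp g 2 μ := hf.ae_eq hfg
  have hKeq : ∀ t ∈ Set.Icc (0:ℝ) T, Kstar H T f t = Kstar H T g t := by
    intro t ht
    unfold Kstar
    congr 1
    refine intervalIntegral.integral_congr_ae ?_
    have h1 : ∀ᵐ x ∂(volume : Measure ℝ), x ∈ Set.Ioc (0:ℝ) T → f x = g x :=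
      (ae_restrict_iff' measurableSet_Ioc).1 hfg
    filter_upwards [h1] with x hx hx2
    rw [Set.uIoc_of_le ht.2] at hx2
    rw [hx ⟨lt_of_le_of_lt ht.1 hx2.1, hx2.2⟩]
  have hKae : Kstar H T f =ᵐ[μ] Kstar H T g := by
    rw [hμ_def]
    exact (ae_restrict_iff' measurableSet_Ioc).2
      (Filter.Eventually.of_forall fun t ht => hKeq t ⟨ht.1.le, ht.2⟩)
  suffices hmain : MemLp (Kstar H T g) 2 μ ∧ eLpNorm (Kstar H T g) 2 μ
      ≤ ENNReal.ofReal (Real.sqrt (2*H) * T ^ (H - 1/2)) * eLpNorm g 2 μ by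
    refine ⟨hmain.1.ae_eq hKae.symm, ?_⟩
    rw [eLpNorm_congr_ae hKae, eLpNorm_congr_ae hfg]
    exact hmain.2
  -- Measurability of Kstar H T g
  have hw_meas : Measurable (fun p : ℝ × ℝ => p.2 ^ e * (p.2 - p.1) ^ (e-1)) := by
    exact (measurable_snd.pow measurable_const).mul
      ((measurable_snd.sub measurable_fst).pow measurable_const)
  have hmeasK : AEStronglyMeasurable (Kstar H T g) μ := by
    have hGm : StronglyMeasurable (fun p : ℝ × ℝ =>
        Set.indicator {q : ℝ × ℝ | q.1 < q.2 ∧ q.2 ≤ T}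
          (fun q => g q.2 * (q.2 ^ e * (q.2 - q.1) ^ (e-1))) p) := by
      refine StronglyMeasurable.indicator ?_ ?_
      · exact ((hgm.measurable.comp measurable_snd).mul hw_meas).stronglyMeasurable
      · exact (measurableSet_lt measurable_fst measurable_snd).inter
          (measurableSet_le measurable_snd measurable_const)
    have hΨ : StronglyMeasurable (fun t : ℝ => ∫ u, Set.indicator
        {q : ℝ × ℝ | q.1 < q.2 ∧ q.2 ≤ T}
          (fun q => g q.2 * (q.2 ^ e * (q.2 - q.1) ^ (e-1))) (t, u)) :=
      StronglyMeasurable.integral_prod_right (f := fun t u => Set.indicator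
        {q : ℝ × ℝ | q.1 < q.2 ∧ q.2 ≤ T}
          (fun q => g q.2 * (q.2 ^ e * (q.2 - q.1) ^ (e-1))) (t, u)) hGm
    have hnice : Measurable (fun t : ℝ => cH H * t ^ (-e) * ∫ u, Set.indicator
        {q : ℝ × ℝ | q.1 < q.2 ∧ q.2 ≤ T}
          (fun q => g q.2 * (q.2 ^ e * (q.2 - q.1) ^ (e-1))) (t, u)) :=
      ((measurable_const.mul (measurable_id.pow measurable_const)).mul hΨ.measurable)
    refine hnice.aestronglyMeasurable.congr ?_
    rw [hμ_def]
    refine (ae_restrict_iff' measurableSet_Ioc).2 (Filter.Eventually.of_forall fun t ht => ?_)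
    unfold Kstar
    rw [he32]
    have h1 : ∫ u, Set.indicator {q : ℝ × ℝ | q.1 < q.2 ∧ q.2 ≤ T}
        (fun q => g q.2 * (q.2 ^ e * (q.2 - q.1) ^ (e-1))) (t, u)
        = ∫ u in Set.Ioc t T, g u * u ^ e * (u - t) ^ (e-1) := by
      rw [← MeasureTheory.integral_indicator measurableSet_Ioc]
      congr 1
      funext u
      by_cases hu : u ∈ Set.Ioc t T
      · rw [Set.indicator_of_mem hu, Set.indicator_of_mem (by exact ⟨hu.1, hu.2⟩), mul_assoc]
      · rw [Set.indicator_of_notMem hu, Set.indicator_of_notMem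
          (by simpa [Set.mem_Ioc] using hu)]
    beta_reduce
    rw [h1, intervalIntegral.integral_of_le ht.2, he_def]
  -- notation
  set F : ℝ → ℝ≥0∞ := fun u => (‖g u‖₊ : ℝ≥0∞) ^ (2:ℝ) with hF_def
  have hFmeas : Measurable F :=
    (hgm.measurable.nnnorm.coe_nnreal_ennreal).pow measurable_const
  have hFne : ∀ u, F u ≠ ⊤ := fun u =>
    ENNReal.rpow_ne_top_of_nonneg (by norm_num) ENNReal.coe_ne_top
  -- Key 1
  have key1 : ∀ t ∈ Set.Ioc (0:ℝ) T,
      ∫⁻ u in Set.Ioc t T, ENNReal.ofReal (u ^ e * (u-t) ^ (e-1))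
        ≤ ENNReal.ofReal (T ^ (2*e) / e) := by
    intro t ht
    have hint : IntegrableOn (fun u => (u - t) ^ (e-1)) (Set.Ioc t T) volume := by
      have h0 := (intervalIntegral.intervalIntegrable_rpow'
        (by linarith : (-1:ℝ) < e-1) (a := 0) (b := T - t)).comp_sub_right t
      simp only [zero_add, sub_add_cancel] at h0
      exact (intervalIntegrable_iff_integrableOn_Ioc_of_le ht.2).1 h0
    have hval : ∫ u in Set.Ioc t T, (u - t) ^ (e-1) = (T - t) ^ e / e := by
      rw [← intervalIntegral.integral_of_le ht.2,
        intervalIntegral.integral_comp_sub_right (fun x => x ^ (e-1)) t]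
      rw [sub_self, integral_rpow (Or.inl (by linarith)), sub_add_cancel,
        Real.zero_rpow he0.ne']
      ring
    calc ∫⁻ u in Set.Ioc t T, ENNReal.ofReal (u ^ e * (u-t) ^ (e-1))
        ≤ ∫⁻ u in Set.Ioc t T, ENNReal.ofReal (T ^ e * (u-t) ^ (e-1)) := by
          refine lintegral_mono_ae ?_
          filter_upwards [ae_restrict_mem measurableSet_Ioc] with u hu
          refine ENNReal.ofReal_le_ofReal (mul_le_mul_of_nonneg_right
            (Real.rpow_le_rpow (le_of_lt (lt_trans ht.1 hu.1)) hu.2 he0.le)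
            (Real.rpow_nonneg (by linarith [hu.1] : (0:ℝ) ≤ u - t) _))
      _ = ENNReal.ofReal (∫ u in Set.Ioc t T, T ^ e * (u-t) ^ (e-1)) := by
          refine (MeasureTheory.ofReal_integral_eq_lintegral_ofReal (hint.const_mul _) ?_).symm
          filter_upwards [ae_restrict_mem measurableSet_Ioc] with u hu
          exact mul_nonneg (Real.rpow_nonneg hT.le _)
            (Real.rpow_nonneg (by linarith [hu.1] : (0:ℝ) ≤ u - t) _)
      _ ≤ ENNReal.ofReal (T ^ (2*e) / e) := by
          refine ENNReal.ofReal_le_ofReal ?_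
          rw [MeasureTheory.integral_const_mul, hval]
          have h1 : (T - t) ^ e ≤ T ^ e :=
            Real.rpow_le_rpow (by linarith [ht.1, ht.2] : (0:ℝ) ≤ T - t) (by linarith [ht.1, ht.2]) he0.le
          have h2 : T ^ e * T ^ e = T ^ (2*e) := by
            rw [← Real.rpow_add hT]; ring_nf
          calc T ^ e * ((T - t) ^ e / e) ≤ T ^ e * (T ^ e / e) := by
                refine mul_le_mul_of_nonneg_left ?_ (Real.rpow_nonneg hT.le _)
                gcongr
            _ = T ^ (2*e) / e := by rw [← h2]; ring
  -- Key 2 : the beta integral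
  set CB : ℝ := Real.Gamma (1-2*e) * Real.Gamma e / Real.Gamma (1-e) with hCB_def
  have ha2 : (0:ℝ) < 1 - 2*e := by rw [he_def]; linarith
  have key2 : ∀ u ∈ Set.Ioc (0:ℝ) T,
      ∫⁻ t in Set.Ioo (0:ℝ) u, ENNReal.ofReal (t ^ (-(2*e)) * (u ^ e * (u-t) ^ (e-1)))
        = ENNReal.ofReal CB := by
    intro u hu
    have hIoo : (volume : Measure ℝ).restrict (Set.Ioo (0:ℝ) u)
        = (volume : Measure ℝ).restrict (Set.Ioc (0:ℝ) u) :=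
      Measure.restrict_congr_set Ioo_ae_eq_Ioc
    rw [hIoo]
    have hint : IntegrableOn (fun t => u ^ e * (t ^ ((1-2*e)-1) * (u-t) ^ (e-1)))
        (Set.Ioc 0 u) volume :=
      ((intervalIntegrable_iff_integrableOn_Ioc_of_le hu.1.le).1
        (beta_scaled_integrable hu.1 ha2 he0)).const_mul _
    have hnn : 0 ≤ᵐ[(volume : Measure ℝ).restrict (Set.Ioc (0:ℝ) u)]
        fun t => u ^ e * (t ^ ((1-2*e)-1) * (u-t) ^ (e-1)) := by
      filter_upwards [ae_restrict_mem measurableSet_Ioc] with t htm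
      exact mul_nonneg (Real.rpow_nonneg hu.1.le _)
        (mul_nonneg (Real.rpow_nonneg htm.1.le _)
          (Real.rpow_nonneg (by linarith [htm.2] : (0:ℝ) ≤ u - t) _))
    calc ∫⁻ t in Set.Ioc (0:ℝ) u, ENNReal.ofReal (t ^ (-(2*e)) * (u ^ e * (u-t) ^ (e-1)))
        = ∫⁻ t in Set.Ioc (0:ℝ) u,
            ENNReal.ofReal (u ^ e * (t ^ ((1-2*e)-1) * (u-t) ^ (e-1))) := by
          refine setLIntegral_congr_fun measurableSet_Ioc (fun t htm => ?_)
          rw [show (1-2*e)-1 = -(2*e) by ring]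
          congr 1
          ring
      _ = ENNReal.ofReal (∫ t in Set.Ioc (0:ℝ) u,
            u ^ e * (t ^ ((1-2*e)-1) * (u-t) ^ (e-1))) :=
          (MeasureTheory.ofReal_integral_eq_lintegral_ofReal hint hnn).symm
      _ = ENNReal.ofReal CB := by
          congr 1
          rw [MeasureTheory.integral_const_mul, ← intervalIntegral.integral_of_le hu.1.le,
            beta_scaled_value hu.1 ha2 he0, show (1-2*e)+e-1 = -e by ring,
            show (1-2*e)+e = 1-e by ring, ← mul_assoc, ← Real.rpow_add hu.1]
          simp [hCB_def]
  -- pointwise bound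
  have keyPt : ∀ t ∈ Set.Ioc (0:ℝ) T,
      (‖Kstar H T g t‖₊ : ℝ≥0∞) ^ (2:ℝ)
        ≤ ENNReal.ofReal (cH H ^ 2) * ENNReal.ofReal (T ^ (2*e) / e) *
            (ENNReal.ofReal (t ^ (-(2*e))) *
              ∫⁻ u in Set.Ioc t T, F u * ENNReal.ofReal (u ^ e * (u-t) ^ (e-1))) := by
    intro t ht
    set w : ℝ → ℝ := fun u => u ^ e * (u-t) ^ (e-1) with hw_def
    have hwm : Measurable w := (measurable_id.pow measurable_const).mul
      ((measurable_id.sub measurable_const).pow measurable_const)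
    -- Step A
    have hA : (‖Kstar H T g t‖₊ : ℝ≥0∞)
        ≤ ENNReal.ofReal (cH H * t ^ (-e)) *
            ∫⁻ u in Set.Ioc t T, ENNReal.ofReal (|g u| * w u) := by
      rw [← enorm_eq_nnnorm, Real.enorm_eq_ofReal_abs]
      unfold Kstar
      rw [he32, ← he_def]
      have h1 : |cH H * t ^ (-e) * ∫ u in t..T, g u * u ^ e * (u - t) ^ (e-1)|
          = cH H * t ^ (-e) * |∫ u in t..T, g u * u ^ e * (u - t) ^ (e-1)| := by
        rw [abs_mul, abs_mul, abs_of_nonneg hc0,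
          abs_of_nonneg (Real.rpow_nonneg ht.1.le _)]
      rw [h1, ENNReal.ofReal_mul (mul_nonneg hc0 (Real.rpow_nonneg ht.1.le _))]
      refine mul_le_mul_right ?_ _
      have h2 : |∫ u in t..T, g u * u ^ e * (u - t) ^ (e-1)|
          ≤ ∫ u in Set.Ioc t T, |g u * u ^ e * (u - t) ^ (e-1)| := by
        rw [← intervalIntegral.integral_of_le ht.2]
        exact intervalIntegral.abs_integral_le_integral_abs ht.2
      refine le_trans (ENNReal.ofReal_le_ofReal h2) ?_
      refine le_trans (ofReal_integral_le (ae_of_all _ fun u => abs_nonneg _)) ?_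
      refine le_of_eq (setLIntegral_congr_fun measurableSet_Ioc
        (fun u hu => ?_))
      congr 1
      rw [hw_def, abs_mul, abs_mul,
        abs_of_nonneg (Real.rpow_nonneg (le_of_lt (lt_trans ht.1 hu.1)) _),
        abs_of_nonneg (Real.rpow_nonneg (by linarith [hu.1] : (0:ℝ) ≤ u - t) _), mul_assoc]
    -- Step B : Cauchy-Schwarz
    have hCS : (∫⁻ u in Set.Ioc t T, ENNReal.ofReal (|g u| * w u)) *
          (∫⁻ u in Set.Ioc t T, ENNReal.ofReal (|g u| * w u))
        ≤ (∫⁻ u in Set.Ioc t T, F u * ENNReal.ofReal (w u)) *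
            ENNReal.ofReal (T ^ (2*e) / e) := by
      set A : ℝ → ℝ≥0∞ := fun u => (‖g u‖₊ : ℝ≥0∞) * (ENNReal.ofReal (w u)) ^ ((2:ℝ)⁻¹)
        with hA_def
      set B : ℝ → ℝ≥0∞ := fun u => (ENNReal.ofReal (w u)) ^ ((2:ℝ)⁻¹) with hB_def
      have hBm : Measurable B := (hwm.ennreal_ofReal).pow measurable_const
      have hAm : Measurable A := (hgm.measurable.nnnorm.coe_nnreal_ennreal).mul hBm
      have hprod : ∀ u, ENNReal.ofReal (|g u| * w u) = A u * B u := by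
        intro u
        rw [ENNReal.ofReal_mul (abs_nonneg _), ← Real.enorm_eq_ofReal_abs, enorm_eq_nnnorm,
          hA_def, hB_def, mul_assoc,
          ← ENNReal.rpow_add_of_nonneg _ _ (by norm_num) (by norm_num)]
        norm_num
      have hcs := ENNReal.lintegral_mul_le_Lp_mul_Lq
        ((volume : Measure ℝ).restrict (Set.Ioc t T))
        (p := 2) (q := 2) Real.HolderConjugate.two_two hAm.aemeasurable hBm.aemeasurable
      have hA2 : ∀ u, A u ^ (2:ℝ) = F u * ENNReal.ofReal (w u) := by
        intro u
        rw [hA_def, ENNReal.mul_rpow_of_nonneg _ _ (by norm_num),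
          ← ENNReal.rpow_mul, hF_def]
        norm_num
      have hB2 : ∀ u, B u ^ (2:ℝ) = ENNReal.ofReal (w u) := by
        intro u
        rw [hB_def, ← ENNReal.rpow_mul]
        norm_num
      simp only [Pi.mul_apply] at hcs
      have hhalf : ∀ x : ℝ≥0∞, x ^ (1/2:ℝ) * x ^ (1/2:ℝ) = x := fun x => by
        rw [← ENNReal.rpow_add_of_nonneg _ _ (by norm_num) (by norm_num)]
        norm_num
      simp only [hprod]
      refine le_trans (mul_le_mul' hcs hcs) ?_
      rw [show ∀ P Q : ℝ≥0∞, (P^(1/2:ℝ)*Q^(1/2:ℝ))*(P^(1/2:ℝ)*Q^(1/2:ℝ))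
          = (P^(1/2:ℝ)*P^(1/2:ℝ))*(Q^(1/2:ℝ)*Q^(1/2:ℝ)) from fun P Q => by ring,
        hhalf, hhalf]
      simp only [hA2, hB2]
      exact mul_le_mul_right (key1 t ht) _
    -- combine A and B
    calc (‖Kstar H T g t‖₊ : ℝ≥0∞) ^ (2:ℝ)
        ≤ (ENNReal.ofReal (cH H * t ^ (-e)) *
            ∫⁻ u in Set.Ioc t T, ENNReal.ofReal (|g u| * w u)) ^ (2:ℝ) :=
          ENNReal.rpow_le_rpow hA (by norm_num)
      _ = (ENNReal.ofReal (cH H * t ^ (-e)))^(2:ℝ) *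
            ((∫⁻ u in Set.Ioc t T, ENNReal.ofReal (|g u| * w u)) *
              (∫⁻ u in Set.Ioc t T, ENNReal.ofReal (|g u| * w u))) := by
          rw [ENNReal.mul_rpow_of_nonneg _ _ (by norm_num)]
          congr 1
          rw [show (2:ℝ) = 1 + 1 by norm_num,
            ENNReal.rpow_add_of_nonneg _ _ (by norm_num) (by norm_num), ENNReal.rpow_one]
      _ ≤ (ENNReal.ofReal (cH H * t ^ (-e)))^(2:ℝ) *
            ((∫⁻ u in Set.Ioc t T, F u * ENNReal.ofReal (w u)) *
              ENNReal.ofReal (T ^ (2*e) / e)) := mul_le_mul_right hCS _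
      _ = ENNReal.ofReal (cH H ^ 2) * ENNReal.ofReal (T ^ (2*e) / e) *
            (ENNReal.ofReal (t ^ (-(2*e))) *
              ∫⁻ u in Set.Ioc t T, F u * ENNReal.ofReal (u ^ e * (u-t) ^ (e-1))) := by
          have hpow : (ENNReal.ofReal (cH H * t ^ (-e)))^(2:ℝ)
              = ENNReal.ofReal (cH H ^ 2) * ENNReal.ofReal (t ^ (-(2*e))) := by
            rw [ENNReal.ofReal_rpow_of_nonneg
              (mul_nonneg hc0 (Real.rpow_nonneg ht.1.le _)) (by norm_num : (0:ℝ) ≤ 2),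
              Real.mul_rpow hc0 (Real.rpow_nonneg ht.1.le _),
              ← Real.rpow_natCast (cH H) 2, ← Real.rpow_mul ht.1.le,
              ENNReal.ofReal_mul (Real.rpow_nonneg hc0 _)]
            norm_num
            rw [show -(e * 2) = -(2*e) by ring]
          rw [hpow, hw_def]
          ring
  -- the double-integral quantity
  set S : ℝ≥0∞ := ∫⁻ t in Set.Ioc (0:ℝ) T, ENNReal.ofReal (t ^ (-(2*e))) *
      ∫⁻ u in Set.Ioc t T, F u * ENNReal.ofReal (u ^ e * (u-t) ^ (e-1)) with hS_def
  have hT2 : (∫⁻ t in Set.Ioc (0:ℝ) T, (‖Kstar H T g t‖₊ : ℝ≥0∞) ^ (2:ℝ))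
      ≤ ENNReal.ofReal (cH H ^ 2) * ENNReal.ofReal (T ^ (2*e) / e) * S := by
    rw [hS_def, ← lintegral_const_mul' _ _
      (ENNReal.mul_ne_top ENNReal.ofReal_ne_top ENNReal.ofReal_ne_top)]
    refine lintegral_mono_ae ?_
    filter_upwards [ae_restrict_mem measurableSet_Ioc] with t ht
    exact keyPt t ht
  -- Tonelli
  set J : ℝ → ℝ → ℝ≥0∞ := fun t u => if t < u then ENNReal.ofReal (t ^ (-(2*e))) *
      (F u * ENNReal.ofReal (u ^ e * (u-t) ^ (e-1))) else 0 with hJ_def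
  have hJm : Measurable (Function.uncurry J) := by
    have huncurry : Function.uncurry J = fun p : ℝ × ℝ =>
        if p.1 < p.2 then ENNReal.ofReal (p.1 ^ (-(2*e))) *
          (F p.2 * ENNReal.ofReal (p.2 ^ e * (p.2-p.1) ^ (e-1))) else 0 := rfl
    rw [huncurry]
    refine Measurable.ite (measurableSet_lt measurable_fst measurable_snd) ?_ measurable_const
    exact ((measurable_fst.pow measurable_const).ennreal_ofReal).mul
      ((hFmeas.comp measurable_snd).mul (hw_meas.ennreal_ofReal))
  have claim1 : ∀ t ∈ Set.Ioc (0:ℝ) T,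
      ENNReal.ofReal (t ^ (-(2*e))) *
        (∫⁻ u in Set.Ioc t T, F u * ENNReal.ofReal (u ^ e * (u-t) ^ (e-1)))
      = ∫⁻ u in Set.Ioc (0:ℝ) T, J t u := by
    intro t ht
    have h1 : ∀ u, J t u = Set.indicator (Set.Ioi t)
        (fun u => ENNReal.ofReal (t ^ (-(2*e))) *
          (F u * ENNReal.ofReal (u ^ e * (u-t) ^ (e-1)))) u := by
      intro u
      rw [hJ_def]
      simp [Set.indicator_apply, Set.mem_Ioi]
    simp only [h1]
    rw [lintegral_indicator measurableSet_Ioi, Measure.restrict_restrict measurableSet_Ioi]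
    rw [show Set.Ioi t ∩ Set.Ioc (0:ℝ) T = Set.Ioc t T from by
      ext x
      simp only [Set.mem_inter_iff, Set.mem_Ioi, Set.mem_Ioc]
      constructor
      · rintro ⟨hx1, _, hx3⟩; exact ⟨hx1, hx3⟩
      · rintro ⟨hx1, hx2⟩; exact ⟨hx1, lt_trans ht.1 hx1, hx2⟩]
    rw [lintegral_const_mul' _ _ ENNReal.ofReal_ne_top]
  have claim2 : ∀ u ∈ Set.Ioc (0:ℝ) T,
      (∫⁻ t in Set.Ioc (0:ℝ) T, J t u) = F u * ENNReal.ofReal CB := by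
    intro u hu
    have h1 : ∀ t, J t u = Set.indicator (Set.Iio u)
        (fun t => ENNReal.ofReal (t ^ (-(2*e))) *
          (F u * ENNReal.ofReal (u ^ e * (u-t) ^ (e-1)))) t := by
      intro t
      rw [hJ_def]
      simp [Set.indicator_apply, Set.mem_Iio]
    simp only [h1]
    rw [lintegral_indicator measurableSet_Iio, Measure.restrict_restrict measurableSet_Iio]
    rw [show Set.Iio u ∩ Set.Ioc (0:ℝ) T = Set.Ioo 0 u from by
      ext x
      simp only [Set.mem_inter_iff, Set.mem_Iio, Set.mem_Ioc, Set.mem_Ioo]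
      constructor
      · rintro ⟨hx1, hx2, _⟩; exact ⟨hx2, hx1⟩
      · rintro ⟨hx1, hx2⟩; exact ⟨hx2, hx1, le_trans hx2.le hu.2⟩]
    have h2 : ∫⁻ t in Set.Ioo (0:ℝ) u, ENNReal.ofReal (t ^ (-(2*e))) *
          (F u * ENNReal.ofReal (u ^ e * (u-t) ^ (e-1)))
        = ∫⁻ t in Set.Ioo (0:ℝ) u,
            F u * ENNReal.ofReal (t ^ (-(2*e)) * (u ^ e * (u-t) ^ (e-1))) := by
      refine setLIntegral_congr_fun measurableSet_Ioo (fun t htm => ?_)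
      rw [ENNReal.ofReal_mul (Real.rpow_nonneg htm.1.le _)]
      ring
    rw [h2, lintegral_const_mul' _ _ (hFne u), key2 u hu]
  have hswap : S = ∫⁻ u in Set.Ioc (0:ℝ) T, F u * ENNReal.ofReal CB := by
    rw [hS_def]
    calc ∫⁻ t in Set.Ioc (0:ℝ) T, ENNReal.ofReal (t ^ (-(2*e))) *
          ∫⁻ u in Set.Ioc t T, F u * ENNReal.ofReal (u ^ e * (u-t) ^ (e-1))
        = ∫⁻ t in Set.Ioc (0:ℝ) T, ∫⁻ u in Set.Ioc (0:ℝ) T, J t u :=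
          setLIntegral_congr_fun measurableSet_Ioc claim1
      _ = ∫⁻ u in Set.Ioc (0:ℝ) T, ∫⁻ t in Set.Ioc (0:ℝ) T, J t u :=
          lintegral_lintegral_swap hJm.aemeasurable
      _ = _ := setLIntegral_congr_fun measurableSet_Ioc claim2
  -- constant arithmetic
  have hGpos1 : 0 < Real.Gamma (3/2 - H) := Real.Gamma_pos_of_pos (by linarith)
  have hGpos2 : 0 < Real.Gamma (H + 1/2) := Real.Gamma_pos_of_pos (by linarith)
  have hGpos3 : 0 < Real.Gamma (2 - 2*H) := Real.Gamma_pos_of_pos (by linarith)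
  have hGe : 0 < Real.Gamma e := Real.Gamma_pos_of_pos he0
  have hCBpos : 0 < CB := by
    rw [hCB_def, show (1:ℝ)-2*e = 2-2*H from by rw [he_def]; ring,
      show (1:ℝ)-e = 3/2-H from by rw [he_def]; ring]
    positivity
  have hconst : cH H ^ 2 * (T ^ (2*e) / e) * CB = 2*H*T^(2*e) := by
    have hX : cH H ^ 2
        = 2*H*Real.Gamma (3/2-H)/(Real.Gamma (H+1/2)*Real.Gamma (2-2*H)) * e^2 := by
      rw [cH, mul_pow, Real.sq_sqrt
        (div_nonneg (mul_nonneg (by linarith) hGpos1.le) (by positivity)), ← he_def]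
    have hGadd : Real.Gamma (H+1/2) = e * Real.Gamma e := by
      rw [show H+1/2 = e+1 from by rw [he_def]; ring, Real.Gamma_add_one he0.ne']
    have key : ∀ x G1 G3 Ge Tp : ℝ, x ≠ 0 → G1 ≠ 0 → G3 ≠ 0 → Ge ≠ 0 →
        (2*H*G1/((x*Ge)*G3) * x^2) * (Tp/x) * (G3 * Ge / G1) = 2*H*Tp := by
      intro x G1 G3 Ge Tp hx hG1 hG3 hGe
      field_simp
    rw [hX, hCB_def, show (1:ℝ)-2*e = 2-2*H from by rw [he_def]; ring,
      show (1:ℝ)-e = 3/2-H from by rw [he_def]; ring, hGadd]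
    exact key e _ _ _ _ he0.ne' hGpos1.ne' hGpos3.ne' hGe.ne'
  have htot : (∫⁻ t in Set.Ioc (0:ℝ) T, (‖Kstar H T g t‖₊ : ℝ≥0∞) ^ (2:ℝ))
      ≤ ENNReal.ofReal (2*H*T^(2*e)) * ∫⁻ u in Set.Ioc (0:ℝ) T, F u := by
    refine le_trans hT2 (le_of_eq ?_)
    rw [hswap, lintegral_mul_const' _ _ ENNReal.ofReal_ne_top]
    rw [show ENNReal.ofReal (cH H ^ 2) * ENNReal.ofReal (T ^ (2*e) / e) *
        ((∫⁻ u in Set.Ioc (0:ℝ) T, F u) * ENNReal.ofReal CB)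
        = ENNReal.ofReal (cH H ^ 2) * ENNReal.ofReal (T ^ (2*e) / e) * ENNReal.ofReal CB *
          (∫⁻ u in Set.Ioc (0:ℝ) T, F u) from by ring]
    congr 1
    rw [← ENNReal.ofReal_mul (sq_nonneg _), ← ENNReal.ofReal_mul
      (mul_nonneg (sq_nonneg _) (div_nonneg (Real.rpow_nonneg hT.le _) he0.le)), hconst]
  -- conclude
  have hsnK : eLpNorm (Kstar H T g) 2 μ
      = (∫⁻ t in Set.Ioc (0:ℝ) T, (‖Kstar H T g t‖₊ : ℝ≥0∞) ^ (2:ℝ)) ^ (1/2:ℝ) := by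
    rw [hμ_def, eLpNorm_eq_lintegral_rpow_enorm_toReal (by norm_num) (by norm_num)]
    norm_num
    rfl
  have hsnG : eLpNorm g 2 μ = (∫⁻ u in Set.Ioc (0:ℝ) T, F u) ^ (1/2:ℝ) := by
    rw [hμ_def, eLpNorm_eq_lintegral_rpow_enorm_toReal (by norm_num) (by norm_num), hF_def]
    norm_num
    rfl
  have hfinal : eLpNorm (Kstar H T g) 2 μ
      ≤ ENNReal.ofReal (Real.sqrt (2*H) * T ^ e) * eLpNorm g 2 μ := by
    rw [hsnK, hsnG]
    refine le_trans (ENNReal.rpow_le_rpow htot (by norm_num : (0:ℝ) ≤ 1/2)) ?_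
    rw [ENNReal.mul_rpow_of_nonneg _ _ (by norm_num : (0:ℝ) ≤ 1/2)]
    refine mul_le_mul_left (le_of_eq ?_) _
    rw [ENNReal.ofReal_rpow_of_nonneg
      (mul_nonneg (by linarith) (Real.rpow_nonneg hT.le _)) (by norm_num : (0:ℝ) ≤ 1/2)]
    congr 1
    rw [Real.mul_rpow (by linarith) (Real.rpow_nonneg hT.le _), Real.sqrt_eq_rpow,
      ← Real.rpow_mul hT.le, show (2*e)*(1/2:ℝ) = e from by ring]
  exact ⟨⟨hmeasK, lt_of_le_of_lt hfinal
    (ENNReal.mul_lt_top ENNReal.ofReal_lt_top hg.2)⟩, hfinal⟩
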